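/- Let (X,T) be a topological dynamical system, 𝒰 a finite open cover of X, and (c_S^n) a system of coefficients. Then Asc(X,𝒰,T) ≤ h_top(X,𝒰,T) ≤ h_top(X,T), and hence also Int(X,𝒰,T) ≤ h_top(X,𝒰,T) ≤ h_top(X,T). In particular, a system with zero topological entropy has zero topological intricacy with respect to every finite open cover. -/

import Mathlib

open Set Filter Topology

/-- Minimal cardinality of a subcover of a family of sets covering `X`. -/
noncomputable def coverNum {X : Type*} (𝒰 : Set (Set X)) : ℕ :=
  sInf {m | ∃ F : Finset (Set X), ↑F ⊆ 𝒰 ∧ F.card = m ∧ ⋃₀ (F : Set (Set X)) = Set.univ}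

/-- The join `⋁_{i ∈ S} T^{-i} 𝒰` of preimages of a cover along a finite set of times
`S ⊆ n* = {0, …, n-1}`. -/
def joinCover {X : Type*} (T : X → X) (𝒰 : Set (Set X)) {n : ℕ} (S : Finset (Fin n)) :
    Set (Set X) :=
  {V | ∃ f : Fin n → Set X, (∀ i, f i ∈ 𝒰) ∧ V = ⋂ i ∈ S, (T^[(i : ℕ)]) ⁻¹' f i}

/-- The set of values `h_top(X,𝒱,T)` over all finite open covers `𝒱`, as extended reals;
its supremum is the topological entropy `h_top(X,T)`. -/
def entropySet {X : Type*} [TopologicalSpace X] (T : X → X) : Set EReal :=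
  {e | ∃ 𝒱 : Set (Set X), 𝒱.Finite ∧ (∀ V ∈ 𝒱, IsOpen V) ∧ ⋃₀ 𝒱 = Set.univ ∧
    ∃ r : ℝ, Tendsto (fun n : ℕ =>
        Real.log (coverNum (joinCover T 𝒱 (Finset.univ : Finset (Fin n)))) / (n : ℝ))
      atTop (𝓝 r) ∧ e = (r : EReal)}

lemma log_nat_mono {a b : ℕ} (hab : a ≤ b) : Real.log a ≤ Real.log b := by
  rcases Nat.eq_zero_or_pos a with rfl | ha
  · simpa using Real.log_natCast_nonneg b
  · exact Real.log_le_log (by exact_mod_cast ha) (by exact_mod_cast hab)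

lemma joinCover_finite {X : Type*} (T : X → X) {𝒰 : Set (Set X)} (hUfin : 𝒰.Finite)
    {n : ℕ} (S : Finset (Fin n)) : (joinCover T 𝒰 S).Finite := by
  have hsub : joinCover T 𝒰 S ⊆ (fun f : Fin n → Set X => ⋂ i ∈ S, (T^[(i : ℕ)]) ⁻¹' f i) ''
      (Set.pi Set.univ fun _ => 𝒰) := by
    rintro V ⟨f, hf, rfl⟩
    exact ⟨f, fun i _ => hf i, rfl⟩
  exact ((Set.Finite.pi fun _ => hUfin).image _).subset hsub

lemma joinCover_cover {X : Type*} (T : X → X) {𝒰 : Set (Set X)}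
    (hUcover : ⋃₀ 𝒰 = Set.univ) {n : ℕ} (S : Finset (Fin n)) :
    ⋃₀ joinCover T 𝒰 S = Set.univ := by
  ext x
  simp only [Set.mem_univ, iff_true, Set.mem_sUnion]
  have hx : ∀ y : X, ∃ U ∈ 𝒰, y ∈ U := by
    intro y
    have : y ∈ ⋃₀ 𝒰 := by rw [hUcover]; trivial
    exact this
  choose g hg hg' using fun i : Fin n => hx (T^[(i : ℕ)] x)
  refine ⟨_, ⟨g, hg, rfl⟩, ?_⟩
  simp only [Set.mem_iInter, Set.mem_preimage]
  exact fun i _ => hg' i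

lemma coverNum_set_nonempty {X : Type*} {𝒱 : Set (Set X)} (hfin : 𝒱.Finite)
    (hcov : ⋃₀ 𝒱 = Set.univ) :
    {m | ∃ F : Finset (Set X), ↑F ⊆ 𝒱 ∧ F.card = m ∧
      ⋃₀ (F : Set (Set X)) = Set.univ}.Nonempty :=
  ⟨hfin.toFinset.card, hfin.toFinset, by simp [hfin.coe_toFinset, hcov]⟩

lemma one_le_coverNum {X : Type*} [Nonempty X] {𝒱 : Set (Set X)} (hfin : 𝒱.Finite)
    (hcov : ⋃₀ 𝒱 = Set.univ) : 1 ≤ coverNum 𝒱 := by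
  obtain ⟨F, hF, hcard, hcov'⟩ := Nat.sInf_mem (coverNum_set_nonempty hfin hcov)
  rw [coverNum, ← hcard]
  rcases F.eq_empty_or_nonempty with rfl | hne
  · exfalso
    have huniv : (Set.univ : Set X).Nonempty := Set.univ_nonempty
    rw [← hcov'] at huniv
    simp at huniv
  · exact Finset.card_pos.mpr hne

lemma coverNum_joinCover_mono {X : Type*} (T : X → X) {𝒰 : Set (Set X)} (hUfin : 𝒰.Finite)
    (hUcover : ⋃₀ 𝒰 = Set.univ) {n : ℕ} {S S' : Finset (Fin n)} (hSS : S ⊆ S') :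
    coverNum (joinCover T 𝒰 S) ≤ coverNum (joinCover T 𝒰 S') := by
  classical
  obtain ⟨F, hF, hcard, hcov⟩ :=
    Nat.sInf_mem (coverNum_set_nonempty (joinCover_finite T hUfin S')
      (joinCover_cover T hUcover S'))
  have hwit : ∀ V ∈ joinCover T 𝒰 S', ∃ f : Fin n → Set X,
      (∀ i, f i ∈ 𝒰) ∧ V = ⋂ i ∈ S', (T^[(i : ℕ)]) ⁻¹' f i := fun V hV => hV
  choose! f hf1 hf2 using hwit
  let g : Set X → Set X := fun V => ⋂ i ∈ S, (T^[(i : ℕ)]) ⁻¹' f V i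
  have key : ∀ V ∈ F, V ⊆ g V ∧ g V ∈ joinCover T 𝒰 S := by
    intro V hV
    have hV' : V ∈ joinCover T 𝒰 S' := hF hV
    refine ⟨?_, ⟨f V, hf1 V hV', rfl⟩⟩
    intro x hx
    rw [hf2 V hV'] at hx
    simp only [Set.mem_iInter] at hx
    show x ∈ ⋂ i ∈ S, (T^[(i : ℕ)]) ⁻¹' f V i
    simp only [Set.mem_iInter]
    exact fun i hi => hx i (hSS hi)
  have hsub : ↑(F.image g) ⊆ joinCover T 𝒰 S := by
    intro W hW
    simp only [Finset.coe_image, Set.mem_image, Finset.mem_coe] at hW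
    obtain ⟨V, hV, rfl⟩ := hW
    exact (key V hV).2
  have hcov2 : ⋃₀ ((F.image g : Finset (Set X)) : Set (Set X)) = Set.univ := by
    apply Set.eq_univ_of_forall
    intro x
    have : x ∈ ⋃₀ (F : Set (Set X)) := by rw [hcov]; trivial
    obtain ⟨V, hV, hxV⟩ := this
    exact ⟨g V, by simpa using ⟨V, hV, rfl⟩, (key V hV).1 hxV⟩
  calc coverNum (joinCover T 𝒰 S) ≤ (F.image g).card :=
        Nat.sInf_le ⟨F.image g, hsub, rfl, hcov2⟩
    _ ≤ F.card := Finset.card_image_le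
    _ = coverNum (joinCover T 𝒰 S') := hcard

/-- `Asc(X,𝒰,T) ≤ h_top(X,𝒰,T) ≤ h_top(X,T)` and
`Int(X,𝒰,T) ≤ h_top(X,𝒰,T) ≤ h_top(X,T)`; in particular a system with zero topological
entropy has zero topological intricacy with respect to every finite open cover. -/
theorem asc_le_entropy_and_int_le_entropy
    {X : Type*} [MetricSpace X] [CompactSpace X] (T : X → X) (hT : Continuous T)
    (𝒰 : Set (Set X)) (hUfin : 𝒰.Finite) (hUopen : ∀ U ∈ 𝒰, IsOpen U)
    (hUcover : ⋃₀ 𝒰 = Set.univ)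
    (c : (n : ℕ) → Finset (Fin n) → ℝ)
    (hc_nonneg : ∀ n (S : Finset (Fin n)), 0 ≤ c n S)
    (hc_sum : ∀ n, ∑ S : Finset (Fin n), c n S = 1)
    (hc_compl : ∀ n (S : Finset (Fin n)), c n Sᶜ = c n S)
    (A I h : ℝ)
    (hAsc : Tendsto (fun n : ℕ =>
        (1 / (n : ℝ)) * ∑ S : Finset (Fin n), c n S *
          Real.log (coverNum (joinCover T 𝒰 S))) atTop (𝓝 A))
    (hInt : Tendsto (fun n : ℕ =>
        (1 / (n : ℝ)) * ∑ S : Finset (Fin n), c n S *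
          Real.log (((coverNum (joinCover T 𝒰 S) : ℝ) *
              (coverNum (joinCover T 𝒰 Sᶜ) : ℝ)) /
            (coverNum (joinCover T 𝒰 (Finset.univ : Finset (Fin n))) : ℝ)))
        atTop (𝓝 I))
    (hEnt : Tendsto (fun n : ℕ =>
        Real.log (coverNum (joinCover T 𝒰 (Finset.univ : Finset (Fin n)))) / (n : ℝ))
        atTop (𝓝 h)) :
    A ≤ h ∧ (h : EReal) ≤ sSup (entropySet T) ∧
    I ≤ h ∧ (I : EReal) ≤ sSup (entropySet T) ∧
    (sSup (entropySet T) = 0 → I = 0) := by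
  classical
  -- membership of h in the entropy set
  have hmem : (h : EReal) ∈ entropySet T := ⟨𝒰, hUfin, hUopen, hUcover, h, hEnt, rfl⟩
  have hhsup : (h : EReal) ≤ sSup (entropySet T) := le_sSup hmem
  -- nonnegativity of h and A
  have hh0 : 0 ≤ h := ge_of_tendsto' hEnt fun n =>
    div_nonneg (Real.log_natCast_nonneg _) (Nat.cast_nonneg n)
  have hA0 : 0 ≤ A := ge_of_tendsto' hAsc fun n =>
    mul_nonneg (by positivity) (Finset.sum_nonneg fun S _ =>
      mul_nonneg (hc_nonneg n S) (Real.log_natCast_nonneg _))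
  -- pointwise Asc ≤ Ent
  have hale : ∀ n : ℕ,
      (1 / (n : ℝ)) * ∑ S : Finset (Fin n), c n S *
        Real.log (coverNum (joinCover T 𝒰 S)) ≤
      Real.log (coverNum (joinCover T 𝒰 (Finset.univ : Finset (Fin n)))) / (n : ℝ) := by
    intro n
    conv_rhs => rw [← one_div_mul_eq_div]
    apply mul_le_mul_of_nonneg_left _ (by positivity)
    calc (∑ S : Finset (Fin n), c n S * Real.log (coverNum (joinCover T 𝒰 S)))
        ≤ ∑ S : Finset (Fin n), c n S *
            Real.log (coverNum (joinCover T 𝒰 (Finset.univ : Finset (Fin n)))) := by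
          refine Finset.sum_le_sum fun S _ => mul_le_mul_of_nonneg_left ?_ (hc_nonneg n S)
          exact log_nat_mono (coverNum_joinCover_mono T hUfin hUcover (Finset.subset_univ S))
      _ = Real.log (coverNum (joinCover T 𝒰 (Finset.univ : Finset (Fin n)))) := by
          rw [← Finset.sum_mul, hc_sum, one_mul]
  have hAh : A ≤ h := le_of_tendsto_of_tendsto' hAsc hEnt hale
  -- the key identity : Int_n = 2 * Asc_n - Ent_n
  have hlogpos : ∀ (n : ℕ) (S : Finset (Fin n)),
      Real.log (((coverNum (joinCover T 𝒰 S) : ℝ) *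
          (coverNum (joinCover T 𝒰 Sᶜ) : ℝ)) /
        (coverNum (joinCover T 𝒰 (Finset.univ : Finset (Fin n))) : ℝ)) =
      Real.log (coverNum (joinCover T 𝒰 S)) + Real.log (coverNum (joinCover T 𝒰 Sᶜ)) -
        Real.log (coverNum (joinCover T 𝒰 (Finset.univ : Finset (Fin n)))) := by
    intro n S
    cases isEmpty_or_nonempty X with
    | inl hempty =>
      have hz : ∀ S' : Finset (Fin n), coverNum (joinCover T 𝒰 S') = 0 := by
        intro S'
        have : (0 : ℕ) ∈ {m | ∃ F : Finset (Set X), ↑F ⊆ joinCover T 𝒰 S' ∧ F.card = m ∧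
            ⋃₀ (F : Set (Set X)) = Set.univ} :=
          ⟨∅, by simp, by simp, by simp [Set.eq_empty_of_isEmpty (Set.univ : Set X)]⟩
        exact Nat.le_zero.mp (Nat.sInf_le this)
      simp [hz]
    | inr hne =>
      have hp : ∀ S' : Finset (Fin n), (0 : ℝ) < (coverNum (joinCover T 𝒰 S') : ℝ) := by
        intro S'
        exact_mod_cast one_le_coverNum (joinCover_finite T hUfin S')
          (joinCover_cover T hUcover S')
      rw [Real.log_div (mul_pos (hp S) (hp Sᶜ)).ne' (hp _).ne', Real.log_mul (hp _).ne' (hp _).ne']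
  have hIdentity : (fun n : ℕ =>
      (1 / (n : ℝ)) * ∑ S : Finset (Fin n), c n S *
        Real.log (((coverNum (joinCover T 𝒰 S) : ℝ) *
            (coverNum (joinCover T 𝒰 Sᶜ) : ℝ)) /
          (coverNum (joinCover T 𝒰 (Finset.univ : Finset (Fin n))) : ℝ))) =
      fun n : ℕ =>
        2 * ((1 / (n : ℝ)) * ∑ S : Finset (Fin n), c n S *
          Real.log (coverNum (joinCover T 𝒰 S))) -
        Real.log (coverNum (joinCover T 𝒰 (Finset.univ : Finset (Fin n)))) / (n : ℝ) := by
    funext n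
    have e : Equiv.Perm (Finset (Fin n)) :=
      Function.Involutive.toPerm compl fun S => compl_compl S
    have hcomplsum : (∑ S : Finset (Fin n), c n S *
        Real.log (coverNum (joinCover T 𝒰 Sᶜ))) =
        ∑ S : Finset (Fin n), c n S * Real.log (coverNum (joinCover T 𝒰 S)) := by
      refine Fintype.sum_equiv (Function.Involutive.toPerm compl fun S => compl_compl S)
        _ _ fun S => ?_
      show _ = c n Sᶜ * Real.log (coverNum (joinCover T 𝒰 Sᶜ))
      rw [hc_compl]
    have hsum : (∑ S : Finset (Fin n), c n S *
        Real.log (((coverNum (joinCover T 𝒰 S) : ℝ) *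
            (coverNum (joinCover T 𝒰 Sᶜ) : ℝ)) /
          (coverNum (joinCover T 𝒰 (Finset.univ : Finset (Fin n))) : ℝ))) =
        2 * (∑ S : Finset (Fin n), c n S * Real.log (coverNum (joinCover T 𝒰 S))) -
          Real.log (coverNum (joinCover T 𝒰 (Finset.univ : Finset (Fin n)))) := by
      have : ∀ S : Finset (Fin n), c n S *
          Real.log (((coverNum (joinCover T 𝒰 S) : ℝ) *
              (coverNum (joinCover T 𝒰 Sᶜ) : ℝ)) /
            (coverNum (joinCover T 𝒰 (Finset.univ : Finset (Fin n))) : ℝ)) =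
          c n S * Real.log (coverNum (joinCover T 𝒰 S)) +
          c n S * Real.log (coverNum (joinCover T 𝒰 Sᶜ)) -
          c n S * Real.log (coverNum (joinCover T 𝒰 (Finset.univ : Finset (Fin n)))) := by
        intro S
        rw [hlogpos n S]
        ring
      rw [Finset.sum_congr rfl fun S _ => this S, Finset.sum_sub_distrib,
        Finset.sum_add_distrib, hcomplsum, ← Finset.sum_mul, hc_sum, one_mul]
      ring
    rw [hsum, div_eq_inv_mul, ← one_div]
    ring
  rw [hIdentity] at hInt
  have hI : I = 2 * A - h := tendsto_nhds_unique hInt ((hAsc.const_mul 2).sub hEnt)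
  have hIh : I ≤ h := by rw [hI]; linarith
  refine ⟨hAh, hhsup, hIh, le_trans (by exact_mod_cast hIh) hhsup, ?_⟩
  intro hsup0
  have hhle : (h : EReal) ≤ 0 := hsup0 ▸ hhsup
  have hh0' : h ≤ 0 := EReal.coe_nonpos.mp hhle
  have : h = 0 := le_antisymm hh0' hh0
  have : A = 0 := le_antisymm (this ▸ hAh) hA0
  rw [hI]
  linarith [le_antisymm hh0' hh0]
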